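/- (Proposition 1: descriptive equivalence implies individual predictive equivalence.) Let β^A, β^B ∈ ℝ^p, let S be a p×p real symmetric positive definite matrix with largest eigenvalue λ₁, and suppose the descriptive-equivalence bound (β^A − β^B)ᵀ S⁻¹ (β^A − β^B) < ε_β² holds for some ε_β > 0. Let X be a random vector in ℝ^p with finite second moments, mean vector μ and covariance matrix Σ. Then the expected absolute difference of the linear predictors satisfies E[|Xᵀβ^A − Xᵀβ^B|] ≤ ε_β · √λ₁ · √(μᵀμ + tr(Σ)). -/

import Mathlib

open Matrix MeasureTheory


lemma quad_form_lower_bound {p : ℕ} (S : Matrix (Fin p) (Fin p) ℝ) (hS : S.PosDef)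
    (lam1 : ℝ) (hub : ∀ i, hS.1.eigenvalues i ≤ lam1) (x : Fin p → ℝ) :
    x ⬝ᵥ x ≤ lam1 * (x ⬝ᵥ S⁻¹ *ᵥ x) := by
  classical
  set U : Matrix (Fin p) (Fin p) ℝ := (hS.1.eigenvectorUnitary : Matrix (Fin p) (Fin p) ℝ) with hU
  set lam : Fin p → ℝ := hS.1.eigenvalues with hlamdef
  have hpos : ∀ i, 0 < lam i := fun i => hS.eigenvalues_pos i
  have hUU : star U * U = 1 := by simp [hU]
  have hUU' : U * star U = 1 := by simp [hU]
  have hspec : S = U * Matrix.diagonal lam * star U := by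
    have h := hS.1.spectral_theorem
    simpa [RCLike.ofReal_real_eq_id] using h
  have hSinv : S⁻¹ = U * Matrix.diagonal (fun i => (lam i)⁻¹) * star U := by
    apply Matrix.inv_eq_left_inv
    rw [hspec]
    have : (U * Matrix.diagonal (fun i => (lam i)⁻¹) * star U) * (U * Matrix.diagonal lam * star U)
        = U * ((Matrix.diagonal (fun i => (lam i)⁻¹) * Matrix.diagonal lam) * star U) := by
      simp only [Matrix.mul_assoc]
      rw [← Matrix.mul_assoc (star U) U, hUU, Matrix.one_mul]
    rw [this, Matrix.diagonal_mul_diagonal]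
    have hd : (fun i => (lam i)⁻¹ * lam i) = fun _ => (1:ℝ) := by
      funext i; exact inv_mul_cancel₀ (hpos i).ne'
    rw [hd]
    rw [show Matrix.diagonal (fun _ : Fin p => (1:ℝ)) = 1 from Matrix.diagonal_one]
    rw [Matrix.one_mul, hUU']
  set c : Fin p → ℝ := star U *ᵥ x with hc
  have hxvU : x ᵥ* U = c := by
    funext i
    simp [hc, Matrix.vecMul, Matrix.mulVec, dotProduct, Matrix.star_apply, mul_comm]
  have h1 : x ⬝ᵥ S⁻¹ *ᵥ x = ∑ i, (lam i)⁻¹ * (c i)^2 := by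
    rw [hSinv, ← Matrix.mulVec_mulVec, ← Matrix.mulVec_mulVec, dotProduct_mulVec, hxvU]
    simp only [dotProduct, Matrix.mulVec_diagonal]
    exact Finset.sum_congr rfl fun i _ => by ring
  have h2 : x ⬝ᵥ x = ∑ i, (c i)^2 := by
    have : x ⬝ᵥ x = c ⬝ᵥ c := by
      calc x ⬝ᵥ x = x ⬝ᵥ ((U * star U) *ᵥ x) := by rw [hUU', Matrix.one_mulVec]
        _ = x ⬝ᵥ (U *ᵥ (star U *ᵥ x)) := by rw [Matrix.mulVec_mulVec]
        _ = (x ᵥ* U) ⬝ᵥ (star U *ᵥ x) := by rw [dotProduct_mulVec]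
        _ = c ⬝ᵥ c := by rw [hxvU, ← hc]
    rw [this]
    simp [dotProduct, pow_two]
  rw [h1, h2, Finset.mul_sum]
  apply Finset.sum_le_sum
  intro i _
  have h3 : (0:ℝ) ≤ (lam i)⁻¹ * (c i)^2 :=
    mul_nonneg (inv_nonneg.2 (hpos i).le) (sq_nonneg _)
  calc (c i)^2 = lam i * ((lam i)⁻¹ * (c i)^2) := by
        rw [← mul_assoc, mul_inv_cancel₀ (hpos i).ne', one_mul]
    _ ≤ lam1 * ((lam i)⁻¹ * (c i)^2) := by
        exact mul_le_mul_of_nonneg_right (hub i) h3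



/-- **Proposition 1.** Descriptive equivalence implies individual predictive
equivalence: if the coefficient difference `q = β^A − β^B` satisfies the Mahalanobis bound
`qᵀ S⁻¹ q < ε_β²` for a symmetric positive definite matrix `S` with largest eigenvalue `λ₁`,
then for a random test vector `X` with mean `μ` and covariance `Σ`, the expected absolute
difference of the linear predictors is at most `ε_β · √λ₁ · √(μᵀμ + tr(Σ))`. -/
theorem descriptive_equiv_implies_individual_predictive_equiv
    {p : ℕ} (βA βB : Fin p → ℝ)
    (S : Matrix (Fin p) (Fin p) ℝ) (hS : S.PosDef) (lam1 : ℝ)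
    (hlam : IsGreatest (Set.range hS.1.eigenvalues) lam1)
    (εβ : ℝ) (hεβ : 0 < εβ)
    (hDE : (βA - βB) ⬝ᵥ S⁻¹ *ᵥ (βA - βB) < εβ ^ 2)
    {Ω : Type*} [MeasurableSpace Ω] (P : Measure Ω) [IsProbabilityMeasure P]
    (X : Ω → Fin p → ℝ)
    (hX : ∀ i, MemLp (fun ω => X ω i) 2 P)
    (μ : Fin p → ℝ) (hμ : ∀ i, μ i = ∫ ω, X ω i ∂P)
    (Cov : Matrix (Fin p) (Fin p) ℝ)
    (hCov : ∀ i j, Cov i j = ∫ ω, (X ω i - μ i) * (X ω j - μ j) ∂P) :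
    ∫ ω, |X ω ⬝ᵥ βA - X ω ⬝ᵥ βB| ∂P ≤
      εβ * Real.sqrt lam1 * Real.sqrt (μ ⬝ᵥ μ + Cov.trace) := by
  classical
  set q : Fin p → ℝ := βA - βB with hqdef
  -- eigenvalue/positivity facts
  obtain ⟨i0, hi0⟩ := hlam.1
  have hlam1pos : 0 < lam1 := hi0 ▸ hS.eigenvalues_pos i0
  -- Step 1: q ⬝ᵥ q < lam1 * εβ^2
  have hq1 : q ⬝ᵥ q ≤ lam1 * (q ⬝ᵥ S⁻¹ *ᵥ q) :=
    quad_form_lower_bound S hS lam1 (fun i => hlam.2 ⟨i, rfl⟩) q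
  have hq2 : q ⬝ᵥ q < lam1 * εβ ^ 2 :=
    lt_of_le_of_lt hq1 (by exact mul_lt_mul_of_pos_left hDE hlam1pos)
  have hqq_nonneg : 0 ≤ q ⬝ᵥ q := by
    simp only [dotProduct]
    exact Finset.sum_nonneg fun i _ => mul_self_nonneg _
  have hcq : Real.sqrt (q ⬝ᵥ q) ≤ εβ * Real.sqrt lam1 := by
    have h1 : Real.sqrt (q ⬝ᵥ q) ≤ Real.sqrt (lam1 * εβ ^ 2) := Real.sqrt_le_sqrt hq2.le
    have h2 : Real.sqrt (lam1 * εβ ^ 2) = εβ * Real.sqrt lam1 := by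
      rw [Real.sqrt_mul hlam1pos.le, Real.sqrt_sq hεβ.le, mul_comm]
    rw [← h2]; exact h1
  -- integrability
  have hXi_int : ∀ i, Integrable (fun ω => X ω i) P := fun i => (hX i).integrable one_le_two
  have hXsq_int : ∀ i, Integrable (fun ω => X ω i ^ 2) P := fun i => (hX i).integrable_sq
  -- second moments
  have hmom : ∀ i, ∫ ω, X ω i ^ 2 ∂P = μ i ^ 2 + Cov i i := by
    intro i
    have hint : ∫ ω, (X ω i - μ i) * (X ω i - μ i) ∂P
        = (∫ ω, X ω i ^ 2 ∂P) - μ i ^ 2 := by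
      have hfun : (fun ω => (X ω i - μ i) * (X ω i - μ i))
          = fun ω => X ω i ^ 2 - (2 * μ i * X ω i - μ i ^ 2) := by
        funext ω; ring
      have hint2 : Integrable (fun ω => 2 * μ i * X ω i - μ i ^ 2) P := by
        exact ((hXi_int i).const_mul _).sub (integrable_const _)
      rw [hfun, integral_sub (hXsq_int i) hint2,
        integral_sub ((hXi_int i).const_mul _) (integrable_const _),
        integral_const_mul, integral_const, ← hμ i]
      simp [measure_univ]
      ring
    have := hCov i i
    rw [hint] at this
    linarith
  -- the function g
  set g : Ω → ℝ := fun ω => Real.sqrt (∑ i, X ω i ^ 2) with hgdef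
  have hsum_nonneg : ∀ ω, 0 ≤ ∑ i, X ω i ^ 2 :=
    fun ω => Finset.sum_nonneg fun i _ => sq_nonneg _
  have hgsq : ∀ ω, g ω ^ 2 = ∑ i, X ω i ^ 2 := fun ω => Real.sq_sqrt (hsum_nonneg ω)
  have hsum_int : Integrable (fun ω => ∑ i, X ω i ^ 2) P :=
    integrable_finset_sum _ fun i _ => hXsq_int i
  have hg_meas : AEStronglyMeasurable g P := by
    have : AEStronglyMeasurable (fun ω => ∑ i, X ω i ^ 2) P :=
      Finset.aestronglyMeasurable_fun_sum _ fun i _ => ((hX i).aestronglyMeasurable.mul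
        (hX i).aestronglyMeasurable).congr (by filter_upwards with ω; simp [pow_two])
    exact Real.continuous_sqrt.comp_aestronglyMeasurable this
  have hg2 : MemLp g 2 P := by
    rw [memLp_two_iff_integrable_sq hg_meas]
    exact hsum_int.congr (by filter_upwards with ω; exact (hgsq ω).symm)
  have hg_int : Integrable g P := hg2.integrable one_le_two
  -- E[g^2] = μ⬝μ + trace
  have hEg2 : ∫ ω, g ω ^ 2 ∂P = μ ⬝ᵥ μ + Cov.trace := by
    calc ∫ ω, g ω ^ 2 ∂P = ∫ ω, ∑ i, X ω i ^ 2 ∂P := by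
          exact integral_congr_ae (by filter_upwards with ω; exact hgsq ω)
      _ = ∑ i, ∫ ω, X ω i ^ 2 ∂P := integral_finset_sum _ fun i _ => hXsq_int i
      _ = ∑ i, (μ i ^ 2 + Cov i i) := by simp_rw [hmom]
      _ = μ ⬝ᵥ μ + Cov.trace := by
          rw [Finset.sum_add_distrib]
          congr 1; simp [dotProduct, Matrix.trace, Matrix.diag, pow_two]
  have htr_nonneg : 0 ≤ μ ⬝ᵥ μ + Cov.trace := by
    rw [← hEg2]; exact integral_nonneg fun ω => sq_nonneg _
  -- E[g] ≤ sqrt(E[g^2])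
  have hEg : ∫ ω, g ω ∂P ≤ Real.sqrt (μ ⬝ᵥ μ + Cov.trace) := by
    have hvar := ProbabilityTheory.variance_nonneg g P
    rw [ProbabilityTheory.variance_eq_sub hg2] at hvar
    have hsq : (∫ ω, g ω ∂P) ^ 2 ≤ ∫ ω, g ω ^ 2 ∂P := by
      have : ∫ ω, (g ^ 2) ω ∂P = ∫ ω, g ω ^ 2 ∂P := by
        apply integral_congr_ae; filter_upwards with ω; simp
      nlinarith [hvar]
    have hEg_nonneg : 0 ≤ ∫ ω, g ω ∂P := integral_nonneg fun ω => Real.sqrt_nonneg _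
    calc ∫ ω, g ω ∂P = Real.sqrt ((∫ ω, g ω ∂P) ^ 2) := (Real.sqrt_sq hEg_nonneg).symm
      _ ≤ Real.sqrt (∫ ω, g ω ^ 2 ∂P) := Real.sqrt_le_sqrt hsq
      _ = Real.sqrt (μ ⬝ᵥ μ + Cov.trace) := by rw [hEg2]
  -- pointwise bound
  have hpt : ∀ ω, |X ω ⬝ᵥ βA - X ω ⬝ᵥ βB| ≤ g ω * Real.sqrt (q ⬝ᵥ q) := by
    intro ω
    have hdq : X ω ⬝ᵥ βA - X ω ⬝ᵥ βB = X ω ⬝ᵥ q := by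
      rw [hqdef, dotProduct_sub]
    rw [hdq]
    have hcs : (X ω ⬝ᵥ q) ^ 2 ≤ (∑ i, X ω i ^ 2) * (∑ i, q i ^ 2) :=
      Finset.sum_mul_sq_le_sq_mul_sq _ _ _
    have hqq : q ⬝ᵥ q = ∑ i, q i ^ 2 := by simp [dotProduct, pow_two]
    calc |X ω ⬝ᵥ q| = Real.sqrt ((X ω ⬝ᵥ q) ^ 2) := (Real.sqrt_sq_eq_abs _).symm
      _ ≤ Real.sqrt ((∑ i, X ω i ^ 2) * (∑ i, q i ^ 2)) := Real.sqrt_le_sqrt hcs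
      _ = g ω * Real.sqrt (q ⬝ᵥ q) := by
          rw [Real.sqrt_mul (hsum_nonneg ω), hqq]
  -- integrability of lhs
  have hlhs_int : Integrable (fun ω => |X ω ⬝ᵥ βA - X ω ⬝ᵥ βB|) P := by
    have h1 : Integrable (fun ω => X ω ⬝ᵥ βA - X ω ⬝ᵥ βB) P := by
      have hA : Integrable (fun ω => X ω ⬝ᵥ βA) P := by
        simp only [dotProduct]
        exact integrable_finset_sum _ fun i _ => (hXi_int i).mul_const _
      have hB : Integrable (fun ω => X ω ⬝ᵥ βB) P := by
        simp only [dotProduct]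
        exact integrable_finset_sum _ fun i _ => (hXi_int i).mul_const _
      exact hA.sub hB
    exact h1.abs
  -- put it together
  calc ∫ ω, |X ω ⬝ᵥ βA - X ω ⬝ᵥ βB| ∂P
      ≤ ∫ ω, g ω * Real.sqrt (q ⬝ᵥ q) ∂P :=
        integral_mono hlhs_int (hg_int.mul_const _) hpt
    _ = (∫ ω, g ω ∂P) * Real.sqrt (q ⬝ᵥ q) := integral_mul_const _ _
    _ ≤ Real.sqrt (μ ⬝ᵥ μ + Cov.trace) * (εβ * Real.sqrt lam1) :=
        mul_le_mul hEg hcq (Real.sqrt_nonneg _)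
          (Real.sqrt_nonneg _)
    _ = εβ * Real.sqrt lam1 * Real.sqrt (μ ⬝ᵥ μ + Cov.trace) := by ring
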